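/- Let Φ be a propositional CNF formula and P(Φ) the associated positive logic program (with atoms x, x̄ for each variable X, clause rules deriving 'contr' from negated clause literals, rules deriving 'inconsistent' from x and x̄, 'assigned_j' from x_j or x̄_j, and 'allAssigned' from all assigned_j). Then Φ is satisfiable if and only if the abduction problem ⟨H, P(Φ), O, γ⟩ with H = {x, x̄ : X ∈ var(Φ)}, O = {not contr, not inconsistent, allAssigned}, and γ ≡ 0 has an admissible solution. -/

import Mathlib

/-- A propositional logic-program rule `head :- pos, not neg`.
`head = none` represents a strong constraint (rule with empty head). -/
structure LPRule where
  head : Option ℕ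
  pos : Finset ℕ
  neg : Finset ℕ
deriving DecidableEq

namespace LP

/-- Truth of a rule head w.r.t. an interpretation; an empty head is never true. -/
def headTrue (I : Set ℕ) : Option ℕ → Prop
  | none => False
  | some a => a ∈ I

/-- The body of a rule is true w.r.t. `I`. -/
def bodyTrue (I : Set ℕ) (r : LPRule) : Prop :=
  (∀ b ∈ r.pos, b ∈ I) ∧ (∀ b ∈ r.neg, b ∉ I)

/-- `I` satisfies rule `r`. -/
def satRule (I : Set ℕ) (r : LPRule) : Prop := bodyTrue I r → headTrue I r.head

/-- `I` is a model of the program `P`. -/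
def isModel (P : Set LPRule) (I : Set ℕ) : Prop := ∀ r ∈ P, satRule I r

/-- A positive (negation-free) program. -/
def isPositive (P : Set LPRule) : Prop := ∀ r ∈ P, r.neg = ∅

/-- A constraint-free program (no rules with empty head). -/
def constraintFree (P : Set LPRule) : Prop := ∀ r ∈ P, r.head ≠ none

/-- The Gelfond-Lifschitz reduct `P^I`. -/
def reduct (P : Set LPRule) (I : Set ℕ) : Set LPRule :=
  (fun r => LPRule.mk r.head r.pos ∅) '' {r ∈ P | ∀ b ∈ r.neg, b ∉ I}

/-- `M` is the least model of `P`. -/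
def isLeastModel (P : Set LPRule) (M : Set ℕ) : Prop :=
  isModel P M ∧ ∀ M', isModel P M' → M ⊆ M'

/-- `M` is a stable model of `P`: it is the least model of the reduct `P^M`. -/
def isStable (P : Set LPRule) (M : Set ℕ) : Prop := isLeastModel (reduct P M) M

/-- `facts S` is the set of facts `{p :- | p ∈ S}`. -/
def facts (S : Set ℕ) : Set LPRule := (fun p => LPRule.mk (some p) ∅ ∅) '' S

/-- The atoms occurring in a rule. -/
def ruleAtoms (r : LPRule) : Set ℕ := {a | r.head = some a} ∪ ↑r.pos ∪ ↑r.neg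

/-- The Herbrand base of a program: all atoms occurring in it. -/
def atoms (P : Set LPRule) : Set ℕ := ⋃ r ∈ P, ruleAtoms r

/-- `p` depends on `q`: some rule has head `p` and `q` in its body. -/
def dependsOn (P : Set LPRule) (p q : ℕ) : Prop :=
  ∃ r ∈ P, r.head = some p ∧ (q ∈ r.pos ∨ q ∈ r.neg)

/-- `P` is stratified: no rule with head `p` and `not q` in the body where
`q` transitively depends on `p`. -/
def stratified (P : Set LPRule) : Prop :=
  ∀ r ∈ P, ∀ p, r.head = some p → ∀ q ∈ r.neg, ¬ Relation.TransGen (dependsOn P) q p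

/-- Hypotheses `H` do not occur in rule heads of `P`. -/
def hypFree (P : Set LPRule) (H : Finset ℕ) : Prop :=
  ∀ r ∈ P, ∀ h ∈ H, r.head ≠ some h

/-- `S` is an admissible solution: `S ⊆ H` and some stable model of
`P ∪ facts S` makes all observations true. -/
def admissible (P : Set LPRule) (H obsP obsN : Finset ℕ) (S : Set ℕ) : Prop :=
  S ⊆ ↑H ∧ ∃ M, isStable (P ∪ facts S) M ∧ (∀ o ∈ obsP, o ∈ M) ∧ (∀ o ∈ obsN, o ∉ M)

/-- `sum_γ`: total penalty of the hypotheses of `H` belonging to `S`. -/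
noncomputable def cost (γ : ℕ → NNReal) (H : Finset ℕ) (S : Set ℕ) : NNReal :=
  ∑ h ∈ H, S.indicator γ h

/-- `S` is an optimal solution: admissible with minimal total penalty. -/
def optimal (P : Set LPRule) (H obsP obsN : Finset ℕ) (γ : ℕ → NNReal) (S : Set ℕ) : Prop :=
  admissible P H obsP obsN S ∧
  ∀ S', admissible P H obsP obsN S' → cost γ H S ≤ cost γ H S'

end LP

namespace LP

/-- The atom `contr`. -/
def contrA : ℕ := 0
/-- The atom `inconsistent`. -/
def inconA : ℕ := 1
/-- The atom `allAssigned`. -/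
def allA : ℕ := 2
/-- The atom `x_j` representing variable `X_j`. -/
def xA (j : ℕ) : ℕ := 3 * j + 3
/-- The atom `x̄_j` representing the negation of `X_j`. -/
def xbA (j : ℕ) : ℕ := 3 * j + 4
/-- The atom `assigned_j`. -/
def asgA (j : ℕ) : ℕ := 3 * j + 5

/-- A propositional CNF: a finite set of clauses, each a finite set of literals
`(variable, polarity)`. -/
abbrev CNF := Finset (Finset (ℕ × Bool))

/-- The variables occurring in a CNF. -/
def cnfVars (Φ : CNF) : Finset ℕ := Φ.biUnion fun C => C.image Prod.fst

/-- The rule `contr :- negate(ℓ_1), ..., negate(ℓ_m)` for a clause, where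
`negate(X) = x̄` and `negate(¬X) = x`. -/
def clauseRule (C : Finset (ℕ × Bool)) : LPRule :=
  ⟨some contrA, C.image (fun l => if l.2 then xbA l.1 else xA l.1), ∅⟩

/-- The positive program `P(Φ)` associated with a CNF `Φ`. -/
def cnfProg (Φ : CNF) : Finset LPRule :=
  Φ.image clauseRule ∪
  (cnfVars Φ).biUnion (fun j =>
    {⟨some inconA, {xA j, xbA j}, ∅⟩,
     ⟨some (asgA j), {xA j}, ∅⟩,
     ⟨some (asgA j), {xbA j}, ∅⟩}) ∪
  {⟨some allA, (cnfVars Φ).image asgA, ∅⟩}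

/-- The hypotheses `{x, x̄ : X ∈ var(Φ)}`. -/
def cnfHyp (Φ : CNF) : Finset ℕ := (cnfVars Φ).biUnion fun j => {xA j, xbA j}

/-- Satisfiability of a CNF. -/
def cnfSat (Φ : CNF) : Prop := ∃ τ : ℕ → Bool, ∀ C ∈ Φ, ∃ l ∈ C, τ l.1 = l.2

end LP

namespace LP

lemma reduct_of_positive {P : Set LPRule} (hP : isPositive P) (M : Set ℕ) :
    reduct P M = P := by
  ext r
  constructor
  · rintro ⟨s, ⟨hs, -⟩, rfl⟩
    have h := hP s hs
    have hse : (fun r => LPRule.mk r.head r.pos ∅) s = s := by cases s; simp_all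
    rw [hse]; exact hs
  · intro hr
    have h := hP r hr
    refine ⟨r, ⟨hr, by simp [h]⟩, ?_⟩
    cases r; simp_all

lemma mem_cnfProg {Φ : CNF} {r : LPRule} :
    r ∈ cnfProg Φ ↔ (∃ C ∈ Φ, clauseRule C = r) ∨
      (∃ j ∈ cnfVars Φ, r = ⟨some inconA, {xA j, xbA j}, ∅⟩ ∨
        r = ⟨some (asgA j), {xA j}, ∅⟩ ∨ r = ⟨some (asgA j), {xbA j}, ∅⟩) ∨
      r = ⟨some allA, (cnfVars Φ).image asgA, ∅⟩ := by
  simp [cnfProg, Finset.mem_union, Finset.mem_biUnion, Finset.mem_insert,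
    Finset.mem_singleton, Finset.mem_image, or_assoc]
  exact or_comm.trans or_assoc

lemma cnfProg_positive (Φ : CNF) : isPositive ↑(cnfProg Φ) := by
  intro r hr
  rcases mem_cnfProg.1 hr with ⟨C, -, rfl⟩ | ⟨j, -, rfl | rfl | rfl⟩ | rfl <;> rfl

lemma facts_positive (S : Set ℕ) : isPositive (facts S) := by
  rintro r ⟨p, hp, rfl⟩; rfl

lemma union_positive {P Q : Set LPRule} (hP : isPositive P) (hQ : isPositive Q) :
    isPositive (P ∪ Q) := by
  rintro r (hr | hr)
  · exact hP r hr
  · exact hQ r hr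

end LP

/-- a CNF `Φ` is satisfiable iff the abduction problem
`⟨H, P(Φ), {allAssigned; not contr; not inconsistent}, γ ≡ 0⟩` has an admissible
solution. -/
theorem sat_iff_admissible (Φ : LP.CNF) :
    LP.cnfSat Φ ↔
      ∃ S, LP.admissible ↑(LP.cnfProg Φ) (LP.cnfHyp Φ)
        {LP.allA} {LP.contrA, LP.inconA} S := by
  classical
  have hpos : ∀ S : Set ℕ, LP.isPositive (↑(LP.cnfProg Φ) ∪ LP.facts S) :=
    fun S => LP.union_positive (LP.cnfProg_positive Φ) (LP.facts_positive S)
  constructor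
  · rintro ⟨τ, hτ⟩
    set V := LP.cnfVars Φ with hV
    set S : Set ℕ := (fun j => if τ j then LP.xA j else LP.xbA j) '' ↑V with hS
    set M : Set ℕ := S ∪ LP.asgA '' ↑V ∪ {LP.allA} with hM
    have hall : LP.allA ∈ M := Or.inr rfl
    have hxA : ∀ k, LP.xA k ∈ M ↔ (k ∈ V ∧ τ k = true) := by
      intro k
      constructor
      · rintro ((⟨j, hj, hje⟩ | ⟨j, hj, hje⟩) | hje)
        · dsimp only at hje; split_ifs at hje with h
          · simp only [LP.xA] at hje
            have hjk : j = k := by omega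
            subst hjk; exact ⟨hj, h⟩
          · exfalso; simp only [LP.xbA, LP.xA] at hje; omega
        · exfalso; simp only [LP.asgA, LP.xA] at hje; omega
        · exfalso; simp only [LP.xA, LP.allA] at hje
          rw [Set.mem_singleton_iff] at hje; omega
      · rintro ⟨hk, hτk⟩
        exact Or.inl (Or.inl ⟨k, hk, by simp [hτk]⟩)
    have hxbA : ∀ k, LP.xbA k ∈ M ↔ (k ∈ V ∧ τ k = false) := by
      intro k
      constructor
      · rintro ((⟨j, hj, hje⟩ | ⟨j, hj, hje⟩) | hje)
        · dsimp only at hje; split_ifs at hje with h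
          · exfalso; simp only [LP.xbA, LP.xA] at hje; omega
          · simp only [LP.xbA] at hje
            have hjk : j = k := by omega
            subst hjk; exact ⟨hj, by simpa using h⟩
        · exfalso; simp only [LP.asgA, LP.xbA] at hje; omega
        · exfalso; simp only [LP.xbA, LP.allA] at hje
          rw [Set.mem_singleton_iff] at hje; omega
      · rintro ⟨hk, hτk⟩
        exact Or.inl (Or.inl ⟨k, hk, by simp [hτk]⟩)
    have hcontr : LP.contrA ∉ M := by
      rintro ((⟨j, hj, hje⟩ | ⟨j, hj, hje⟩) | hje)
      · dsimp only at hje; split_ifs at hje <;> simp only [LP.xA, LP.xbA, LP.contrA] at hje <;> omega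
      · simp only [LP.asgA, LP.contrA] at hje; omega
      · simp only [LP.contrA, LP.allA] at hje
        rw [Set.mem_singleton_iff] at hje; omega
    have hincon : LP.inconA ∉ M := by
      rintro ((⟨j, hj, hje⟩ | ⟨j, hj, hje⟩) | hje)
      · dsimp only at hje; split_ifs at hje <;> simp only [LP.xA, LP.xbA, LP.inconA] at hje <;> omega
      · simp only [LP.asgA, LP.inconA] at hje; omega
      · simp only [LP.inconA, LP.allA] at hje
        rw [Set.mem_singleton_iff] at hje; omega
    refine ⟨S, ?_, M, ?_, ?_, ?_⟩
    · rintro n ⟨j, hj, rfl⟩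
      simp only [LP.cnfHyp, Finset.coe_biUnion, Set.mem_iUnion, Finset.mem_coe]
      exact ⟨j, hj, by split_ifs <;> simp⟩
    · rw [LP.isStable, LP.reduct_of_positive (hpos S)]
      constructor
      · rintro r (hr | ⟨p, hp, rfl⟩)
        · rcases LP.mem_cnfProg.1 hr with ⟨C, hC, rfl⟩ | ⟨j, hj, rfl | rfl | rfl⟩ | rfl
          · rintro ⟨hb, -⟩
            exfalso
            obtain ⟨l, hl, hlτ⟩ := hτ C hC
            have hmem : (if l.2 then LP.xbA l.1 else LP.xA l.1) ∈ M := by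
              apply hb
              simp only [LP.clauseRule, Finset.mem_image]
              exact ⟨l, hl, rfl⟩
            cases hl2 : l.2
            · rw [hl2] at hmem hlτ
              simp at hmem
              have := (hxA l.1).1 (by simpa using hmem)
              simp [this.2] at hlτ
            · rw [hl2] at hmem hlτ
              simp at hmem
              have := (hxbA l.1).1 (by simpa using hmem)
              simp [this.2] at hlτ
          · rintro ⟨hb, -⟩
            exfalso
            have h1 := (hxA j).1 (hb _ (by simp))
            have h2 := (hxbA j).1 (hb _ (by simp))
            rw [h1.2] at h2
            exact absurd h2.2 (by simp)
          · intro _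
            exact Or.inl (Or.inr ⟨j, hj, rfl⟩)
          · intro _
            exact Or.inl (Or.inr ⟨j, hj, rfl⟩)
          · intro _
            exact hall
        · intro _
          exact Or.inl (Or.inl hp)
      · intro M' hM'
        have hS' : S ⊆ M' := by
          intro n hn
          have := hM' ⟨some n, ∅, ∅⟩ (Or.inr ⟨n, hn, rfl⟩)
          exact this ⟨by simp, by simp⟩
        have hasg' : ∀ j ∈ V, LP.asgA j ∈ M' := by
          intro j hj
          by_cases h : τ j
          · have hr : (⟨some (LP.asgA j), {LP.xA j}, ∅⟩ : LPRule) ∈ LP.cnfProg Φ :=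
              LP.mem_cnfProg.2 (Or.inr (Or.inl ⟨j, hj, Or.inr (Or.inl rfl)⟩))
            refine hM' _ (Or.inl hr) ⟨?_, by simp⟩
            intro b hb
            simp only [Finset.mem_singleton] at hb
            subst hb
            exact hS' ⟨j, hj, by simp [h]⟩
          · have hr : (⟨some (LP.asgA j), {LP.xbA j}, ∅⟩ : LPRule) ∈ LP.cnfProg Φ :=
              LP.mem_cnfProg.2 (Or.inr (Or.inl ⟨j, hj, Or.inr (Or.inr rfl)⟩))
            refine hM' _ (Or.inl hr) ⟨?_, by simp⟩
            intro b hb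
            simp only [Finset.mem_singleton] at hb
            subst hb
            exact hS' ⟨j, hj, by simp [h]⟩
        have hall' : LP.allA ∈ M' := by
          have hr : (⟨some LP.allA, V.image LP.asgA, ∅⟩ : LPRule) ∈ LP.cnfProg Φ :=
            LP.mem_cnfProg.2 (Or.inr (Or.inr rfl))
          refine hM' _ (Or.inl hr) ⟨?_, by simp⟩
          intro b hb
          obtain ⟨j, hj, rfl⟩ := Finset.mem_image.1 hb
          exact hasg' j hj
        rintro n ((hn | ⟨j, hj, rfl⟩) | hn)
        · exact hS' hn
        · exact hasg' j hj
        · rw [Set.mem_singleton_iff] at hn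
          subst hn; exact hall'
    · intro o ho
      rw [Finset.mem_singleton] at ho
      subst ho; exact hall
    · intro o ho
      rcases Finset.mem_insert.1 ho with rfl | ho
      · exact hcontr
      · rw [Finset.mem_singleton] at ho
        subst ho; exact hincon
  · rintro ⟨S, hSH, M, hstab, hobsP, hobsN⟩
    rw [LP.isStable, LP.reduct_of_positive (hpos S)] at hstab
    obtain ⟨hMmod, hMmin⟩ := hstab
    have hallM : LP.allA ∈ M := hobsP _ (by simp)
    have hcontrM : LP.contrA ∉ M := hobsN _ (by simp)
    have hSatoms : ∀ p ∈ S, ∃ j, p = LP.xA j ∨ p = LP.xbA j := by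
      intro p hp
      have := hSH hp
      simp only [LP.cnfHyp, Finset.mem_coe, Finset.mem_biUnion, Finset.mem_insert,
        Finset.mem_singleton] at this
      obtain ⟨j, -, h⟩ := this
      exact ⟨j, h⟩
    have claimA : ∀ j ∈ LP.cnfVars Φ, LP.xA j ∈ M ∨ LP.xbA j ∈ M := by
      intro j hj
      by_contra hc
      push_neg at hc
      obtain ⟨h1, h2⟩ := hc
      set M' : Set ℕ := M \ {LP.asgA j, LP.allA} with hM'
      have hmod' : LP.isModel (↑(LP.cnfProg Φ) ∪ LP.facts S) M' := by
        intro r hr hbody'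
        have hbody : LP.bodyTrue M r := by
          refine ⟨fun b hb => (hbody'.1 b hb).1, fun b hb => ?_⟩
          rw [hpos S r hr] at hb
          simp at hb
        have hhead := hMmod r hr hbody
        rcases hr with hr | hr
        · rcases LP.mem_cnfProg.1 hr with ⟨C, hC, rfl⟩ | ⟨j', hj', rfl | rfl | rfl⟩ | rfl
          · exact absurd hhead hcontrM
          · refine ⟨hhead, ?_⟩
            simp only [Set.mem_insert_iff, Set.mem_singleton_iff, LP.inconA, LP.asgA, LP.allA]
            omega
          · have hx : LP.xA j' ∈ M' := hbody'.1 _ (by simp)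
            have hne : j' ≠ j := by rintro rfl; exact h1 hx.1
            refine ⟨hhead, ?_⟩
            simp only [Set.mem_insert_iff, Set.mem_singleton_iff, LP.asgA, LP.allA]
            omega
          · have hx : LP.xbA j' ∈ M' := hbody'.1 _ (by simp)
            have hne : j' ≠ j := by rintro rfl; exact h2 hx.1
            refine ⟨hhead, ?_⟩
            simp only [Set.mem_insert_iff, Set.mem_singleton_iff, LP.asgA, LP.allA]
            omega
          · exfalso
            have hmem : LP.asgA j ∈ M' :=
              hbody'.1 _ (Finset.mem_image.2 ⟨j, hj, rfl⟩)
            exact hmem.2 (by simp)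
        · obtain ⟨p, hp, rfl⟩ := hr
          obtain ⟨k, hk | hk⟩ := hSatoms p hp <;> subst hk <;>
            refine ⟨hhead, ?_⟩ <;>
            simp only [Set.mem_insert_iff, Set.mem_singleton_iff, LP.xA, LP.xbA,
              LP.asgA, LP.allA] <;> omega
      have hsub := hMmin M' hmod'
      exact (hsub hallM).2 (by simp)
    refine ⟨fun j => if LP.xA j ∈ M then true else false, ?_⟩
    intro C hC
    have hrC : LP.clauseRule C ∈ LP.cnfProg Φ := LP.mem_cnfProg.2 (Or.inl ⟨C, hC, rfl⟩)
    have hsat := hMmod _ (Or.inl (Finset.mem_coe.2 hrC))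
    have hnb : ¬ ∀ b ∈ (LP.clauseRule C).pos, b ∈ M := by
      intro h
      exact hcontrM (hsat ⟨h, by simp [LP.clauseRule]⟩)
    push_neg at hnb
    obtain ⟨b, hb, hbM⟩ := hnb
    simp only [LP.clauseRule, Finset.mem_image] at hb
    obtain ⟨l, hl, rfl⟩ := hb
    refine ⟨l, hl, ?_⟩
    have hlv : l.1 ∈ LP.cnfVars Φ :=
      Finset.mem_biUnion.2 ⟨C, hC, Finset.mem_image.2 ⟨l, hl, rfl⟩⟩
    cases hl2 : l.2
    · rw [hl2] at hbM
      simp at hbM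
      simp only [if_neg hbM]
    · rw [hl2] at hbM
      simp at hbM
      have hx : LP.xA l.1 ∈ M := (claimA l.1 hlv).resolve_right (by simpa using hbM)
      simp [hx]
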